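/- For every i ≥ 1 and every x ∈ A_i^+ + Q(ℓ_i, r_i), one has |x − C_i^-|² − |x − C_i^+|² = 4 r_i (x₁ − u_i) + 4 w_i x₂ > 0; in particular x is strictly closer to C_i^+ than to C_i^-. Symmetrically, every x ∈ A_i^- − Q(ℓ_i, r_i) is strictly closer to C_i^- than to C_i^+. -/
import Mathlib


open MeasureTheory Metric

/-- For every `x ∈ A_i^+ + Q(ℓ_i, r_i)` one has
`|x - C_i^-|² - |x - C_i^+|² = 4 r_i (x₁ - u_i) + 4 w_i x₂ > 0`, so `x` is strictly
closer to `C_i^+` than to `C_i^-`; symmetrically, every `x ∈ A_i^- - Q(ℓ_i, r_i)` is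
strictly closer to `C_i^-` than to `C_i^+`. -/
theorem stmt12 (d : ℕ) (hd : 2 ≤ d)
    (ℓ r w u : ℕ → ℝ)
    (hℓ : ∀ i, 0 < ℓ i) (hr : ∀ i, 0 < r i) (hw : ∀ i, 0 < w i)
    (hsep : ∀ i, 100 * max (ℓ i) (max (r i) (w i)) ≤ u (i + 1) - u i)
    (hsep' : ∀ i, 100 * max (ℓ (i + 1)) (max (r (i + 1)) (w (i + 1))) ≤ u (i + 1) - u i)
    (hwr : ∀ i, 100 * r i ≤ w i)
    (Q : ℝ → ℝ → Set (EuclideanSpace ℝ (Fin d)))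
    (hQ : ∀ L R : ℝ, Q L R = {x : EuclideanSpace ℝ (Fin d) |
      0 < x ⟨0, by omega⟩ ∧ x ⟨0, by omega⟩ < L ∧ |x ⟨1, by omega⟩| < R / 2 ∧
      ∀ j : Fin d, 2 ≤ (j : ℕ) → |x j| < 1 / 2})
    (Ap Am Cp Cm : ℕ → EuclideanSpace ℝ (Fin d))
    (hAp : ∀ i, Ap i = EuclideanSpace.single (⟨0, by omega⟩ : Fin d) (u i + w i))
    (hAm : ∀ i, Am i = EuclideanSpace.single (⟨0, by omega⟩ : Fin d) (u i - w i))
    (hCp : ∀ i, Cp i = EuclideanSpace.single (⟨0, by omega⟩ : Fin d) (u i + r i) +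
      EuclideanSpace.single (⟨1, by omega⟩ : Fin d) (w i))
    (hCm : ∀ i, Cm i = EuclideanSpace.single (⟨0, by omega⟩ : Fin d) (u i - r i) -
      EuclideanSpace.single (⟨1, by omega⟩ : Fin d) (w i))
    (i : ℕ) (x : EuclideanSpace ℝ (Fin d)) :
    (x ∈ (fun q => Ap i + q) '' Q (ℓ i) (r i) →
      dist x (Cm i) ^ 2 - dist x (Cp i) ^ 2 =
        4 * r i * (x ⟨0, by omega⟩ - u i) + 4 * w i * x ⟨1, by omega⟩ ∧
      0 < 4 * r i * (x ⟨0, by omega⟩ - u i) + 4 * w i * x ⟨1, by omega⟩ ∧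
      dist x (Cp i) < dist x (Cm i)) ∧
    (x ∈ (fun q => Am i - q) '' Q (ℓ i) (r i) →
      dist x (Cm i) < dist x (Cp i)) := by
  have hd0 : 0 < d := by omega
  have hd1 : 1 < d := by omega
  set i0 : Fin d := ⟨0, by omega⟩ with hi0
  set i1 : Fin d := ⟨1, by omega⟩ with hi1
  have hne : i0 ≠ i1 := by simp [hi0, hi1, Fin.ext_iff]
  have hCm0 : Cm i i0 = u i - r i := by
    simp [hCm, EuclideanSpace.single_apply, hne]
  have hCm1 : Cm i i1 = -(w i) := by
    simp [hCm, EuclideanSpace.single_apply, hne.symm]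
  have hCp0 : Cp i i0 = u i + r i := by
    simp [hCp, EuclideanSpace.single_apply, hne]
  have hCp1 : Cp i i1 = w i := by
    simp [hCp, EuclideanSpace.single_apply, hne.symm]
  have hsq : ∀ y : EuclideanSpace ℝ (Fin d), dist x y ^ 2 = ∑ j, (x j - y j) ^ 2 := by
    intro y
    rw [EuclideanSpace.dist_eq, Real.sq_sqrt (Finset.sum_nonneg fun j _ => sq_nonneg _)]
    simp [Real.dist_eq, sq_abs]
  have key : dist x (Cm i) ^ 2 - dist x (Cp i) ^ 2 =
      4 * r i * (x i0 - u i) + 4 * w i * x i1 := by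
    rw [hsq, hsq, ← Finset.sum_sub_distrib,
      ← Finset.sum_subset (Finset.subset_univ ({i0, i1} : Finset (Fin d)))
        (fun j _ hj => ?_), Finset.sum_pair hne]
    · rw [hCm0, hCm1, hCp0, hCp1]; ring
    · simp only [Finset.mem_insert, Finset.mem_singleton, not_or] at hj
      have hm : Cm i j = 0 := by
        simp [hCm, EuclideanSpace.single_apply, hj.1, hj.2]
      have hp : Cp i j = 0 := by
        simp [hCp, EuclideanSpace.single_apply, hj.1, hj.2]
      rw [hm, hp]; ring
  constructor
  · rintro ⟨q, hq, rfl⟩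
    rw [hQ] at hq
    obtain ⟨hq0, hq0', hq1, -⟩ := hq
    have hx0 : (Ap i + q) i0 = u i + w i + q i0 := by
      simp [hAp, EuclideanSpace.single_apply]
    have hx1 : (Ap i + q) i1 = q i1 := by
      simp [hAp, EuclideanSpace.single_apply, hne.symm]
    have hq1' : -(r i / 2) < q i1 := (abs_lt.1 hq1).1
    have hpos : 0 < 4 * r i * ((Ap i + q) i0 - u i) + 4 * w i * ((Ap i + q) i1) := by
      rw [hx0, hx1]
      have h1 : 4 * r i * w i < 4 * r i * (w i + q i0) := by nlinarith [hr i]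
      nlinarith [hr i, hw i, hwr i, mul_pos (hr i) hq0, mul_pos (hw i) (hr i)]
    refine ⟨key, hpos, ?_⟩
    have : dist (Ap i + q) (Cp i) ^ 2 < dist (Ap i + q) (Cm i) ^ 2 := by linarith [key]
    exact lt_of_pow_lt_pow_left₀ 2 dist_nonneg this
  · rintro ⟨q, hq, rfl⟩
    rw [hQ] at hq
    obtain ⟨hq0, hq0', hq1, -⟩ := hq
    have hx0 : (Am i - q) i0 = u i - w i - q i0 := by
      simp [hAm, EuclideanSpace.single_apply]
    have hx1 : (Am i - q) i1 = -q i1 := by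
      simp [hAm, EuclideanSpace.single_apply, hne.symm]
    have hq1l : -(r i / 2) < q i1 := (abs_lt.1 hq1).1
    have hneg : 4 * r i * ((Am i - q) i0 - u i) + 4 * w i * ((Am i - q) i1) < 0 := by
      rw [hx0, hx1]
      nlinarith [hr i, hw i, hwr i, mul_pos (hr i) hq0, mul_pos (hw i) (hr i)]
    have : dist (Am i - q) (Cm i) ^ 2 < dist (Am i - q) (Cp i) ^ 2 := by linarith [key]
    exact lt_of_pow_lt_pow_left₀ 2 dist_nonneg this
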